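/- arXiv:1706.04877 — 3 statements merged into one kernel-verified Lean document; each statement's English description precedes it below -/
import Mathlib

section
/- Let K = ℚ[x]/(x³ − x² − 24x + 27), the cyclic cubic field of conductor 73, with a ∈ K a root of x³ − x² − 24x + 27. Then the element ε₁ = (2/3)a² − (14/3)a + 7 lies in the ring of integers O_K and is a unit of O_K. -/
open NumberField

/-- In the cyclic cubic field of conductor 73 defined by `x³ - x² - 24x + 27` with
root `a`, the element `ε₁ = (2/3)a² - (14/3)a + 7` is an algebraic integer and a unit
of the ring of integers. -/
theorem eps_is_unit_conductor_73
    (K : Type*) [Field K] [NumberField K] [IsGalois ℚ K]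
    (hdeg : Module.finrank ℚ K = 3)
    (a : K) (ha : a ^ 3 - a ^ 2 - 24 * a + 27 = 0) :
    ∃ ε : 𝓞 K, (ε : K) = (2 / 3) * a ^ 2 - (14 / 3) * a + 7 ∧ IsUnit ε := by
  set e : K := (2 / 3) * a ^ 2 - (14 / 3) * a + 7 with he
  have key : e ^ 3 - 49 * e ^ 2 + 119 * e + 1 = 0 := by
    rw [he]
    linear_combination ((8/27 : K) * a ^ 3 - (160/27) * a ^ 2 + (872/27) * a - 136/3) * ha
  have hint : IsIntegral ℤ e := by
    refine ⟨Polynomial.X ^ 3 - 49 * Polynomial.X ^ 2 + 119 * Polynomial.X + 1, ?_, ?_⟩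
    · monicity!
    · simp only [Polynomial.eval₂_add, Polynomial.eval₂_sub, Polynomial.eval₂_mul,
        Polynomial.eval₂_pow, Polynomial.eval₂_X, Polynomial.eval₂_ofNat,
        Polynomial.eval₂_one]
      linear_combination key
  let ε : 𝓞 K := ⟨e, hint⟩
  refine ⟨ε, rfl, ?_⟩
  refine IsUnit.of_mul_eq_one (-ε ^ 2 + 49 * ε - 119) ?_
  ext
  push_cast
  show e * (-e ^ 2 + 49 * e - 119) = 1
  linear_combination -key
end

section
/- Let K = ℚ[x]/(x³ − x² − 24x + 27) with a ∈ K a root of x³ − x² − 24x + 27, let O_K be its ring of integers, let ε₁ = (2/3)a² − (14/3)a + 7 ∈ O_K^× and π = (1/3)a² + (2/3)a − 11, a prime element of O_K of norm 3. Then ε₁² ≢ 1 (mod π²), i.e. the prime (π) is a non-Wieferich prime of O_K to the base ε₁. -/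
open NumberField

/-- In the cyclic cubic field of conductor 73 defined by `x³ - x² - 24x + 27` with root
`a`, the unit `ε₁ = (2/3)a² - (14/3)a + 7` satisfies `ε₁² ≢ 1 (mod π²)` for the prime
`π = (1/3)a² + (2/3)a - 11` of norm 3: `(π)` is non-Wieferich to the base `ε₁`. -/
theorem pi_nonWieferich_conductor_73
    (K : Type*) [Field K] [NumberField K] [IsGalois ℚ K]
    (hdeg : Module.finrank ℚ K = 3)
    (a : K) (ha : a ^ 3 - a ^ 2 - 24 * a + 27 = 0)
    (ε : (𝓞 K)ˣ) (hε : ((ε : 𝓞 K) : K) = (2 / 3) * a ^ 2 - (14 / 3) * a + 7)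
    (π : 𝓞 K) (hπ : (π : K) = (1 / 3) * a ^ 2 + (2 / 3) * a - 11)
    (hπprime : Prime π) (hπnorm : Ideal.absNorm (Ideal.span {π}) = 3) :
    (ε : 𝓞 K) ^ 2 - 1 ∉ Ideal.span {π} ^ 2 := by
  intro hmem
  have haint : IsIntegral ℤ a := by
    refine ⟨Polynomial.X ^ 3 - Polynomial.X ^ 2 - Polynomial.C 24 * Polynomial.X
      + Polynomial.C 27, ?_, ?_⟩
    · monicity!
    · simp only [Polynomial.eval₂_add, Polynomial.eval₂_sub, Polynomial.eval₂_mul,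
        Polynomial.eval₂_pow, Polynomial.eval₂_X, Polynomial.eval₂_C,
        Polynomial.eval₂_ofNat, map_ofNat]
      linear_combination ha
  obtain ⟨aO, haO⟩ : ∃ aO : 𝓞 K, (aO : K) = a := ⟨⟨a, haint⟩, rfl⟩
  obtain ⟨c, hcdef⟩ : ∃ c : 𝓞 K,
      c = (-224 + 88 * aO - 8 * aO ^ 2) + (-4 - 4 * aO - 4 * aO ^ 2) * π := ⟨_, rfl⟩
  have key1 : (ε : 𝓞 K) ^ 2 - 1 = π * c := by
    have : (((ε : 𝓞 K) ^ 2 - 1 : 𝓞 K) : K) = ((π * c : 𝓞 K) : K) := by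
      rw [hcdef]
      push_cast
      simp only [map_ofNat, haO, hε, hπ]
      linear_combination (-644/9 - 80/9 * a + 8/3 * a ^ 2 + 4/9 * a ^ 3) * ha
    exact RingOfIntegers.coe_injective this
  have key2 : c = (2 * aO ^ 2 - 2 * aO + 2) * π + 22 := by
    have : ((c : 𝓞 K) : K) = (((2 * aO ^ 2 - 2 * aO + 2) * π + 22 : 𝓞 K) : K) := by
      rw [hcdef]
      push_cast
      simp only [map_ofNat, haO, hπ]
      linear_combination (-20/3 - 2 * a) * ha
    exact RingOfIntegers.coe_injective this
  rw [Ideal.span_singleton_pow, Ideal.mem_span_singleton, key1, pow_two] at hmem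
  have hπ0 : π ≠ 0 := hπprime.ne_zero
  have hdvdc : π ∣ c := (mul_dvd_mul_iff_left hπ0).mp hmem
  have h3 : π ∣ (3 : 𝓞 K) := by
    rw [← Ideal.mem_span_singleton]
    have h := Ideal.absNorm_mem (Ideal.span {π})
    rw [hπnorm] at h
    exact_mod_cast h
  have h22 : π ∣ (22 : 𝓞 K) := by
    have : (22 : 𝓞 K) = c - (2 * aO ^ 2 - 2 * aO + 2) * π := by rw [key2]; ring
    rw [this]
    exact dvd_sub hdvdc (Dvd.intro_left _ rfl)
  have h1 : π ∣ (1 : 𝓞 K) := by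
    have : (1 : 𝓞 K) = 22 - 7 * 3 := by norm_num
    rw [this]
    exact dvd_sub h22 (h3.mul_left 7)
  exact hπprime.not_unit (isUnit_of_dvd_one h1)
end

section
/- Let K = ℚ[x]/(x³ − x² − 24x + 27) with a ∈ K a root of x³ − x² − 24x + 27, let O_K be its ring of integers, and let π = (1/3)a² + (2/3)a − 11, a prime element of O_K of norm 3. Then the canonical map O_K^× → (O_K/(π²))^× is surjective; that is, {π} is an admissible set of primes for O_K. -/
open NumberField

set_option maxHeartbeats 1600000 in
set_option synthInstance.maxHeartbeats 400000 in
/-- In the cyclic cubic field of conductor 73 defined by `x³ - x² - 24x + 27` with root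
`a`, the prime `π = (1/3)a² + (2/3)a - 11` of norm 3 forms an admissible set: the
canonical map `(𝓞 K)ˣ → (𝓞 K ⧸ (π²))ˣ` is surjective. -/
theorem pi_admissible_conductor_73
    (K : Type*) [Field K] [NumberField K] [IsGalois ℚ K]
    (hdeg : Module.finrank ℚ K = 3)
    (a : K) (ha : a ^ 3 - a ^ 2 - 24 * a + 27 = 0)
    (π : 𝓞 K) (hπ : (π : K) = (1 / 3) * a ^ 2 + (2 / 3) * a - 11)
    (hπprime : Prime π) (hπnorm : Ideal.absNorm (Ideal.span {π}) = 3) :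
    Function.Surjective
      ⇑(Units.map (Ideal.Quotient.mk (Ideal.span {π} ^ 2)).toMonoidHom :
        (𝓞 K)ˣ →* ((𝓞 K) ⧸ Ideal.span {π} ^ 2)ˣ) := by
  have hπ' : algebraMap (𝓞 K) K π = (1 / 3) * a ^ 2 + (2 / 3) * a - 11 := hπ
  -- the minimal polynomial of π
  have hp : π ^ 3 + 16 * π ^ 2 + 61 * π + 3 = 0 := by
    apply RingOfIntegers.coe_injective
    simp only [map_add, map_mul, map_pow, map_ofNat, map_zero, map_one]
    rw [hπ']
    linear_combination ((a ^ 3 + 7 * a ^ 2 - 8 * a - 63) / 27) * ha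
  set I : Ideal (𝓞 K) := Ideal.span {π} ^ 2 with hI
  have hI' : I = Ideal.span {π ^ 2} := by rw [hI, Ideal.span_singleton_pow]
  -- the unit g and its inverse v
  set g : 𝓞 K := -1 - 20 * π - 2 * π ^ 2 with hg
  set v : 𝓞 K := -121 - 32 * π - 2 * π ^ 2 with hv
  have hgv : g * v = 1 := by
    rw [hg, hv]; linear_combination (4 * π + 40) * hp
  -- g^2 - 1 = π * w, with w coprime to π
  set w : 𝓞 K := 28 + 160 * π + 16 * π ^ 2 with hw
  have hg2 : g ^ 2 - 1 = π * w := by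
    rw [hg, hw]; linear_combination (4 * π) * hp
  have hwcop : w + π * (9 * π ^ 2 + 128 * π + 389) = 1 := by
    rw [hw]; linear_combination 9 * hp
  -- g^3 + 1 = π^2 * t3
  set t3 : 𝓞 K := 350 - 1064 * π - 112 * π ^ 2 with ht3
  have hg3 : g ^ 3 + 1 = π ^ 2 * t3 := by
    rw [hg, ht3]; linear_combination (-8 * π ^ 3 - 112 * π ^ 2 - 20 * π) * hp
  -- 9 = π^2 * s2
  have h9 : (9 : 𝓞 K) = π ^ 2 * (π ^ 2 + 16 * π + 61) ^ 2 := by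
    linear_combination (-π ^ 3 - 16 * π ^ 2 - 61 * π + 3) * hp
  -- cardinality of the quotient ring
  have hcard : Nat.card ((𝓞 K) ⧸ I) = 9 := by
    have h : Ideal.absNorm I = 9 := by rw [hI, map_pow, hπnorm]; norm_num
    rwa [Ideal.absNorm_apply, Submodule.cardQuot_apply] at h
  have hfin : Finite ((𝓞 K) ⧸ I) := Nat.finite_of_card_ne_zero (by omega)
  have hnontriv : Nontrivial ((𝓞 K) ⧸ I) :=
    Finite.one_lt_card_iff_nontrivial.mp (by omega)
  have hπnotunit : ¬ IsUnit π := hπprime.not_unit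
  have hπ2mem : ∀ x : 𝓞 K, x ∈ I ↔ π ^ 2 ∣ x := by
    intro x; rw [hI', Ideal.mem_span_singleton]
  -- the image of g in the quotient
  set f : (𝓞 K)ˣ →* ((𝓞 K) ⧸ I)ˣ :=
    (Units.map (Ideal.Quotient.mk I).toMonoidHom : (𝓞 K)ˣ →* ((𝓞 K) ⧸ I)ˣ) with hf
  set u₀ : (𝓞 K)ˣ := ⟨g, v, hgv, by rw [mul_comm]; exact hgv⟩ with hu₀
  set g' : ((𝓞 K) ⧸ I)ˣ := f u₀ with hg'
  have hg'val : (g' : (𝓞 K) ⧸ I) = Ideal.Quotient.mk I g := rfl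
  -- (mk g)^3 = -1
  have hmk3 : (Ideal.Quotient.mk I g) ^ 3 = -1 := by
    have hmem : g ^ 3 + 1 ∈ I := (hπ2mem _).mpr ⟨t3, hg3⟩
    have h0 := Ideal.Quotient.eq_zero_iff_mem.mpr hmem
    rw [map_add, map_pow, map_one] at h0
    exact eq_neg_of_add_eq_zero_left h0
  -- 2 ≠ 0 in the quotient
  have h2ne : (2 : (𝓞 K) ⧸ I) ≠ 0 := by
    intro h0
    have h0' : Ideal.Quotient.mk I (2 : 𝓞 K) = 0 := by rw [map_ofNat]; exact h0
    obtain ⟨z, hz⟩ := (hπ2mem _).mp (Ideal.Quotient.eq_zero_iff_mem.mp h0')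
    apply hπnotunit
    refine IsUnit.of_mul_eq_one (a := π) (π * (5 * z - (π ^ 2 + 16 * π + 61) ^ 2)) ?_
    linear_combination (-5) * hz + h9
  -- order computations for g'
  have h6 : g' ^ 6 = 1 := by
    apply Units.ext
    rw [Units.val_pow_eq_pow_val, hg'val, Units.val_one]
    calc (Ideal.Quotient.mk I g) ^ 6 = ((Ideal.Quotient.mk I g) ^ 3) ^ 2 := by ring
    _ = 1 := by rw [hmk3]; ring
  have h2 : g' ^ 2 ≠ 1 := by
    intro h1
    have hval : (Ideal.Quotient.mk I g) ^ 2 = 1 := by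
      have := congrArg (Units.val) h1
      rwa [Units.val_pow_eq_pow_val, hg'val, Units.val_one] at this
    have hmem : g ^ 2 - 1 ∈ I := by
      rw [← Ideal.Quotient.eq_zero_iff_mem, map_sub, map_pow, map_one, hval, sub_self]
    obtain ⟨z, hz⟩ := (hπ2mem _).mp hmem
    rw [hg2] at hz
    have hwz : w = π * z := by
      have hπne : π ≠ 0 := hπprime.ne_zero
      apply mul_left_cancel₀ hπne
      rw [hz]; ring
    apply hπnotunit
    refine IsUnit.of_mul_eq_one (a := π) (z + (9 * π ^ 2 + 128 * π + 389)) ?_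
    linear_combination hwcop - hwz
  have h3 : g' ^ 3 ≠ 1 := by
    intro h1
    have hval : (Ideal.Quotient.mk I g) ^ 3 = 1 := by
      have := congrArg (Units.val) h1
      rwa [Units.val_pow_eq_pow_val, hg'val, Units.val_one] at this
    apply h2ne
    have hneg : (-1 : (𝓞 K) ⧸ I) = 1 := by rw [← hmk3, hval]
    linear_combination -hneg
  -- orderOf g' = 6
  have hdvd : orderOf g' ∣ 6 := orderOf_dvd_of_pow_eq_one h6
  have hord : orderOf g' = 6 := by
    have hpos : 0 < orderOf g' := orderOf_pos g'
    have hle : orderOf g' ≤ 6 := Nat.le_of_dvd (by norm_num) hdvd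
    set d := orderOf g' with hd
    have hpow := pow_orderOf_eq_one g'
    rw [← hd] at hpow
    interval_cases d
    · rw [pow_one] at hpow
      exact absurd (by rw [hpow, one_pow] : g' ^ 2 = 1) h2
    · exact absurd hpow h2
    · exact absurd hpow h3
    · norm_num at hdvd
    · norm_num at hdvd
    · rfl
  -- the units group has exactly 6 elements
  have hufin : Finite (((𝓞 K) ⧸ I)ˣ) := inferInstance
  have hcardu : Nat.card (((𝓞 K) ⧸ I)ˣ) = 6 := by
    have hdvd' : 6 ∣ Nat.card (((𝓞 K) ⧸ I)ˣ) := hord ▸ orderOf_dvd_natCard g'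
    have hle : Nat.card (((𝓞 K) ⧸ I)ˣ) ≤ 9 := by
      have := Nat.card_le_card_of_injective (Units.val : ((𝓞 K) ⧸ I)ˣ → (𝓞 K) ⧸ I)
        (fun _ _ h => Units.ext h)
      omega
    have hpos : 0 < Nat.card (((𝓞 K) ⧸ I)ˣ) := Nat.card_pos
    omega
  have htop : Subgroup.zpowers g' = ⊤ := by
    apply Subgroup.eq_top_of_card_eq
    rw [Nat.card_zpowers, hord, hcardu]
  -- conclude surjectivity
  intro x
  have hx : x ∈ Subgroup.zpowers g' := htop ▸ Subgroup.mem_top x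
  obtain ⟨k, hk⟩ := hx
  exact ⟨u₀ ^ k, by rw [map_zpow]; exact hk⟩
end
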